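/- Let V: [0,1] → M₂(ℝ) be integrable with V = Vᵀ and tr V = 0, and let N solve N' = VN with N(0) = I. Set H = NᵀN. Let U₊(x,y) be the solution of ∂ₓU₊(x,y) = V(x)U₊(x,y) with U₊(y,y) = I. Then det(∫₀¹ H(ξ) dξ) = (1/2) ∫₀¹∫₀¹ ‖U₊(x,y)‖²_{HS} dx dy, where ‖·‖_{HS} is the Hilbert–Schmidt norm. -/

import Mathlib

open MeasureTheory Matrix intervalIntegral

attribute [local instance] Matrix.normedAddCommGroup Matrix.normedSpace

open Topology Filter Set

local notation "Mat" => Matrix (Fin 2) (Fin 2) ℝ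

noncomputable instance matTop : TopologicalSpace Mat :=
  Matrix.normedAddCommGroup.toUniformSpace.toTopologicalSpace

instance matCM : ContinuousMul Mat :=
  ⟨(@continuous_mul Mat instTopologicalSpaceMatrix _ _ : _)⟩

noncomputable def adj2 (A : Mat) : Mat := A.trace • (1 : Mat) - A

lemma mul_adj2 (A : Mat) : A * adj2 A = A.det • (1 : Mat) := by
  ext i j; fin_cases i <;> fin_cases j <;>
    simp [adj2, Matrix.mul_apply, Fin.sum_univ_two, Matrix.trace_fin_two, Matrix.det_fin_two,
      Matrix.one_apply] <;> ring

lemma adj2_mul (A B : Mat) : adj2 (A * B) = adj2 B * adj2 A := by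
  ext i j; fin_cases i <;> fin_cases j <;>
    simp [adj2, Matrix.mul_apply, Fin.sum_univ_two, Matrix.trace_fin_two,
      Matrix.one_apply] <;> ring

lemma adj2_transpose (A : Mat) : (adj2 A)ᵀ = adj2 Aᵀ := by
  ext i j; fin_cases i <;> fin_cases j <;>
    simp [adj2, Matrix.trace_fin_two, Matrix.one_apply]

lemma trace_mul_adj2 (A : Mat) : (A * adj2 A).trace = 2 * A.det := by
  rw [mul_adj2]; simp [Matrix.trace_smul, Matrix.trace_one]; ring

lemma trace_mul_adj2_comm (A B : Mat) : (A * adj2 B).trace = (B * adj2 A).trace := by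
  simp [adj2, Matrix.trace_fin_two, Matrix.mul_apply, Fin.sum_univ_two, Matrix.one_apply]; ring

lemma norm_mul_le2 (A B : Mat) : ‖A * B‖ ≤ 2 * (‖A‖ * ‖B‖) := by
  refine (Matrix.norm_le_iff (by positivity)).2 fun i j => ?_
  have h : ∀ (k : Fin 2), ‖A i k * B k j‖ ≤ ‖A‖ * ‖B‖ := fun k => by
    rw [norm_mul]
    exact mul_le_mul (Matrix.norm_entry_le_entrywise_sup_norm A)
      (Matrix.norm_entry_le_entrywise_sup_norm B) (norm_nonneg _) (norm_nonneg _)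
  calc ‖(A * B) i j‖ = ‖A i 0 * B 0 j + A i 1 * B 1 j‖ := by
        rw [Matrix.mul_apply, Fin.sum_univ_two]
    _ ≤ ‖A i 0 * B 0 j‖ + ‖A i 1 * B 1 j‖ := norm_add_le _ _
    _ ≤ 2 * (‖A‖ * ‖B‖) := by have := h 0; have := h 1; linarith

lemma iOn_null {f : ℝ → Mat} {s : Set ℝ} (h : volume s = 0) : IntegrableOn f s volume := by
  rw [IntegrableOn, Measure.restrict_eq_zero.mpr h]
  exact integrable_zero_measure

lemma II_of_Icc {f : ℝ → Mat} {a x p q : ℝ} (h : IntegrableOn f (Set.Icc a x) volume)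
    (hp : p ∈ Set.Icc a x) (hq : q ∈ Set.Icc a x) : IntervalIntegrable f volume p q :=
  (h.mono_set (Set.uIcc_subset_Icc hp hq)).intervalIntegrable

lemma contOn_of_eq {V₀ W : ℝ → Mat} {C : Mat} {a b : ℝ}
    (hint : IntegrableOn (fun s => V₀ s * W s) (Set.Icc a b) volume)
    (hW : ∀ x ∈ Set.Icc a b, W x = C + ∫ s in a..x, V₀ s * W s) :
    ContinuousOn W (Set.Icc a b) := by
  have h1 := continuousOn_primitive (μ := volume) (f := fun s => V₀ s * W s) (a := a) (b := b) hint
  have h2 : ContinuousOn (fun x => C + ∫ t in Set.Ioc a x, V₀ t * W t) (Set.Icc a b) :=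
    continuousOn_const.add h1
  exact h2.congr fun x hx => by rw [hW x hx, intervalIntegral.integral_of_le hx.1]

noncomputable def mulRightCLM (C : Mat) : Mat →L[ℝ] Mat :=
  LinearMap.toContinuousLinearMap (LinearMap.mulRight ℝ C)

noncomputable def mulLeftCLM (C : Mat) : Mat →L[ℝ] Mat :=
  LinearMap.toContinuousLinearMap (LinearMap.mulLeft ℝ C)

lemma bootstrap {V₀ W : ℝ → Mat} {C : Mat} {a b : ℝ} (hab : a ≤ b)
    (hV : IntegrableOn V₀ (Set.Icc a b) volume)
    (hW : ∀ x ∈ Set.Icc a b, W x = C + ∫ s in a..x, V₀ s * W s) :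
    IntegrableOn (fun s => V₀ s * W s) (Set.Icc a b) volume := by
  have hVn : IntegrableOn (fun s => ‖V₀ s‖) (Set.Icc a b) volume := hV.norm
  set F := fun s => V₀ s * W s with hF
  set S := {x | x ∈ Set.Icc a b ∧ IntegrableOn F (Set.Icc a x) volume} with hS
  have haS : a ∈ S := ⟨⟨le_rfl, hab⟩, by
    rw [Set.Icc_self]; exact iOn_null (by simp)⟩
  have hbdd : BddAbove S := ⟨b, fun x hx => hx.1.2⟩
  set T := sSup S with hTdef
  have haT : a ≤ T := le_csSup hbdd haS
  have hTb : T ≤ b := csSup_le ⟨a, haS⟩ (fun x hx => hx.1.2)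
  have hIco : ∀ x ∈ Set.Ico a T, IntegrableOn F (Set.Icc a x) volume := by
    intro x hx
    obtain ⟨x', hx'S, hxx'⟩ := exists_lt_of_lt_csSup ⟨a, haS⟩ hx.2
    exact hx'S.2.mono_set (Set.Icc_subset_Icc_right hxx'.le)
  have hcont : ∀ x ∈ Set.Ico a T, ContinuousOn W (Set.Icc a x) := by
    intro x hx
    exact contOn_of_eq (hIco x hx)
      (fun p hp => hW p ⟨hp.1, hp.2.trans ((hx.2.le).trans hTb)⟩)
  -- primitive of the norm of V₀
  set G := fun u => ∫ t in Set.Ioc a u, ‖V₀ t‖ with hGdef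
  have hGcont : ContinuousOn G (Set.Icc a b) := continuousOn_primitive hV.norm
  have hGdiff : ∀ p q : ℝ, p ∈ Set.Icc a b → q ∈ Set.Icc a b → p ≤ q →
      (∫ s in p..q, ‖V₀ s‖) = G q - G p := by
    intro p q hp hq hpq
    have h1 : IntervalIntegrable (fun s => ‖V₀ s‖) volume a q :=
      (hVn.mono_set (Set.uIcc_subset_Icc ⟨le_rfl, hab⟩ hq)).intervalIntegrable
    have h2 : IntervalIntegrable (fun s => ‖V₀ s‖) volume a p :=
      (hVn.mono_set (Set.uIcc_subset_Icc ⟨le_rfl, hab⟩ hp)).intervalIntegrable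
    rw [← intervalIntegral.integral_interval_sub_left h1 h2,
      intervalIntegral.integral_of_le hq.1, intervalIntegral.integral_of_le hp.1]
  have hGmono : ∀ p q : ℝ, p ∈ Set.Icc a b → q ∈ Set.Icc a b → p ≤ q → G p ≤ G q := by
    intro p q hp hq hpq
    have h0 : (0:ℝ) ≤ ∫ s in p..q, ‖V₀ s‖ :=
      intervalIntegral.integral_nonneg hpq fun u _ => norm_nonneg _
    rw [hGdiff p q hp hq hpq] at h0; linarith
  have hkey : IntegrableOn F (Set.Icc a T) volume := by
    rcases eq_or_lt_of_le haT with h | h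
    · rw [← h, Set.Icc_self]; exact iOn_null (by simp)
    · have hne : (𝓝[Set.Ico a T] T).NeBot :=
        mem_closure_iff_nhdsWithin_neBot.mp (by rw [closure_Ico h.ne]; exact ⟨haT, le_rfl⟩)
      have hev : ∀ᶠ u in 𝓝[Set.Icc a b] T, G T - 1/4 < G u :=
        (hGcont T ⟨haT, hTb⟩).eventually (lt_mem_nhds (by linarith))
      have hsub : Set.Ico a T ⊆ Set.Icc a b := fun u hu => ⟨hu.1, hu.2.le.trans hTb⟩
      have hev2 : ∀ᶠ u in 𝓝[Set.Ico a T] T, G T - 1/4 < G u :=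
        hev.filter_mono (nhdsWithin_mono T hsub)
      obtain ⟨t₀, ht₀, ht₀mem⟩ := (hev2.and (eventually_mem_nhdsWithin)).exists
      have ht₀Icc : t₀ ∈ Set.Icc a b := hsub ht₀mem
      -- pointwise bound on Ico t₀ T
      have hWt₀bd : ∀ x ∈ Set.Ico t₀ T, ‖W x‖ ≤ 2 * ‖W t₀‖ := by
        intro x hx
        have hxIco : x ∈ Set.Ico a T := ⟨ht₀mem.1.trans hx.1, hx.2⟩
        have hxIcc : x ∈ Set.Icc a b := hsub hxIco
        have hint := hIco x hxIco
        have hKc : ContinuousOn W (Set.Icc t₀ x) :=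
          (hcont x hxIco).mono (Set.Icc_subset_Icc_left ht₀mem.1)
        obtain ⟨ξ, hξK, hξmax⟩ :=
          isCompact_Icc.exists_isMaxOn (Set.nonempty_Icc.mpr hx.1) hKc.norm
        have hξx : ξ ≤ x := hξK.2
        have hξIcc : ξ ∈ Set.Icc a b := ⟨ht₀Icc.1.trans hξK.1, (hξx.trans hx.2.le).trans hTb⟩
        have heq : W ξ - W t₀ = ∫ s in t₀..ξ, F s := by
          have h1 : IntervalIntegrable F volume a ξ :=
            II_of_Icc hint ⟨le_rfl, ht₀mem.1.trans hx.1⟩ ⟨ht₀Icc.1.trans hξK.1, hξx⟩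
          have h2 : IntervalIntegrable F volume a t₀ :=
            II_of_Icc hint ⟨le_rfl, ht₀mem.1.trans hx.1⟩ ⟨ht₀Icc.1, hx.1⟩
          rw [hW ξ hξIcc, hW t₀ ht₀Icc, ← intervalIntegral.integral_interval_sub_left h1 h2]
          abel
        have hξ2 : ‖∫ s in t₀..ξ, F s‖ ≤ ∫ s in t₀..ξ, 2 * ‖W ξ‖ * ‖V₀ s‖ := by
          refine (intervalIntegral.norm_integral_le_integral_norm hξK.1).trans ?_
          refine intervalIntegral.integral_mono_on hξK.1
            (II_of_Icc hint ⟨ht₀Icc.1, hx.1⟩ ⟨ht₀Icc.1.trans hξK.1, hξx⟩).norm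
            (((show IntegrableOn (fun s => 2 * ‖W ξ‖ * ‖V₀ s‖) (Set.Icc a b) volume from hVn.const_mul _).mono_set
              (Set.uIcc_subset_Icc ht₀Icc hξIcc)).intervalIntegrable) ?_
          intro s hs
          have hsK : s ∈ Set.Icc t₀ x := ⟨hs.1, hs.2.trans hξx⟩
          have hws : ‖W s‖ ≤ ‖W ξ‖ := hξmax hsK
          calc ‖F s‖ ≤ 2 * (‖V₀ s‖ * ‖W s‖) := norm_mul_le2 _ _
            _ ≤ 2 * ‖W ξ‖ * ‖V₀ s‖ := by
                nlinarith [norm_nonneg (V₀ s), norm_nonneg (W s)]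
        have hξ3 : (∫ s in t₀..ξ, 2 * ‖W ξ‖ * ‖V₀ s‖) = 2 * ‖W ξ‖ * (G ξ - G t₀) := by
          rw [intervalIntegral.integral_const_mul, hGdiff t₀ ξ ht₀Icc hξIcc hξK.1]
        have hGle : G ξ - G t₀ ≤ 1/4 := by
          have := hGmono ξ T hξIcc ⟨haT, hTb⟩ (hξx.trans hx.2.le)
          linarith
        have hWξ : ‖W ξ‖ ≤ 2 * ‖W t₀‖ := by
          have hn1 := norm_sub_norm_le (W ξ) (W t₀)
          rw [heq] at hn1
          nlinarith [norm_nonneg (W ξ), norm_nonneg (W t₀), hξ2, hξ3]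
        exact le_trans (show ‖W x‖ ≤ ‖W ξ‖ from hξmax ⟨hx.1, le_rfl⟩) hWξ
      obtain ⟨M₀, hM₀⟩ := isCompact_Icc.exists_bound_of_continuousOn (hcont t₀ ht₀mem)
      set M := max M₀ (2 * ‖W t₀‖) with hMdef
      have hMbd : ∀ p ∈ Set.Ico a T, ‖W p‖ ≤ M := by
        intro p hp
        rcases le_or_gt p t₀ with h' | h'
        · exact (hM₀ p ⟨hp.1, h'⟩).trans (le_max_left _ _)
        · exact (hWt₀bd p ⟨h'.le, hp.2⟩).trans (le_max_right _ _)
      have hWIco : ContinuousOn W (Set.Ico a T) := by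
        intro p hp
        have hmid : (p + T)/2 ∈ Set.Ico a T := ⟨le_trans hp.1 (by linarith [hp.2.le]), by linarith [hp.2]⟩
        have h1 := (hcont _ hmid) p ⟨hp.1, by linarith [hp.2]⟩
        refine h1.mono_of_mem_nhdsWithin (mem_nhdsWithin.mpr ⟨Set.Iio ((p + T)/2), isOpen_Iio, by
          simp only [Set.mem_Iio]; linarith [hp.2], fun q hq => ⟨hq.2.1, hq.1.le⟩⟩)
      have hmeas : AEStronglyMeasurable F (volume.restrict (Set.Ico a T)) :=
        ((hV.mono_set hsub).aestronglyMeasurable).mul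
          (hWIco.aestronglyMeasurable measurableSet_Ico)
      have hIcoT : IntegrableOn F (Set.Ico a T) volume := by
        refine Integrable.mono' ((show IntegrableOn (fun s => 2 * M * ‖V₀ s‖) (Set.Icc a b) volume from hVn.const_mul _).mono_set hsub) hmeas ?_
        refine (ae_restrict_iff' measurableSet_Ico).mpr (Filter.Eventually.of_forall fun s hs => ?_)
        calc ‖F s‖ ≤ 2 * (‖V₀ s‖ * ‖W s‖) := norm_mul_le2 _ _
          _ ≤ 2 * M * ‖V₀ s‖ := by nlinarith [hMbd s hs, norm_nonneg (V₀ s), norm_nonneg (W s)]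
      have hun := hIcoT.union (iOn_null (f := F) (s := {T}) (by simp))
      rwa [Set.Ico_union_right haT] at hun
  rcases eq_or_lt_of_le hTb with hTeq | hTlt
  · rwa [hTeq] at hkey
  · exfalso
    have hWC : ∀ x ∈ Set.Ioc T b, W x = C := by
      intro x hx
      have hxIcc : x ∈ Set.Icc a b := ⟨haT.trans hx.1.le, hx.2⟩
      have hnotS : x ∉ S := fun hxS => absurd (le_csSup hbdd hxS) (not_le.mpr hx.1)
      have hnotInt : ¬ IntervalIntegrable F volume a x := by
        intro hII
        refine hnotS ⟨hxIcc, ?_⟩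
        have h1 : IntegrableOn F (Set.Ioc a x) volume :=
          (intervalIntegrable_iff_integrableOn_Ioc_of_le hxIcc.1).mp hII
        have h2 := h1.union (iOn_null (f := F) (s := {a}) (by simp))
        rwa [Set.union_comm, ← Set.insert_eq, Set.Ioc_insert_left hxIcc.1] at h2
      rw [hW x hxIcc, intervalIntegral.integral_undef hnotInt, add_zero]
    have hIocInt : IntegrableOn F (Set.Ioc T b) volume := by
      have hsub2 : Set.Ioc T b ⊆ Set.Icc a b := fun u hu => ⟨haT.trans hu.1.le, hu.2⟩
      have hC : IntegrableOn (fun s => V₀ s * C) (Set.Ioc T b) volume := by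
        exact (mulRightCLM C).integrable_comp (hV.mono_set hsub2)
      exact IntegrableOn.congr_fun hC (fun s hs => by simp only [hF, hWC s hs]) measurableSet_Ioc
    have hbS : b ∈ S := ⟨⟨hab, le_rfl⟩, by
      have := hkey.union hIocInt
      rwa [Set.Icc_union_Ioc_eq_Icc haT hTb] at this⟩
    exact absurd (le_csSup hbdd hbS) (not_le.mpr hTlt)

lemma prim_sub {g : ℝ → ℝ} {a b p q : ℝ} (hab : a ≤ b)
    (hg : IntegrableOn g (Set.Icc a b) volume) (hp : p ∈ Set.Icc a b) (hq : q ∈ Set.Icc a b) :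
    (∫ s in p..q, g s) = (∫ t in Set.Ioc a q, g t) - (∫ t in Set.Ioc a p, g t) := by
  rw [← intervalIntegral.integral_of_le hq.1, ← intervalIntegral.integral_of_le hp.1,
    ← intervalIntegral.integral_interval_sub_left
      (hg.mono_set (Set.uIcc_subset_Icc ⟨le_rfl, hab⟩ hq)).intervalIntegrable
      (hg.mono_set (Set.uIcc_subset_Icc ⟨le_rfl, hab⟩ hp)).intervalIntegrable]

lemma uniq {V₀ W₁ W₂ : ℝ → Mat} {C : Mat} {a b : ℝ} (hab : a ≤ b)
    (hV : IntegrableOn V₀ (Set.Icc a b) volume)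
    (h1 : ∀ x ∈ Set.Icc a b, W₁ x = C + ∫ s in a..x, V₀ s * W₁ s)
    (h2 : ∀ x ∈ Set.Icc a b, W₂ x = C + ∫ s in a..x, V₀ s * W₂ s) :
    ∀ x ∈ Set.Icc a b, W₁ x = W₂ x := by
  have hVn : IntegrableOn (fun s => ‖V₀ s‖) (Set.Icc a b) volume := hV.norm
  have hI1 := bootstrap hab hV h1
  have hI2 := bootstrap hab hV h2
  have hc1 := contOn_of_eq hI1 h1
  have hc2 := contOn_of_eq hI2 h2
  set f := fun x => W₁ x - W₂ x with hfdef
  have hfc : ContinuousOn f (Set.Icc a b) := hc1.sub hc2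
  have hfint : IntegrableOn (fun s => V₀ s * f s) (Set.Icc a b) volume := by
    have h := hI1.sub hI2
    have he : (fun s => V₀ s * f s) = fun s => V₀ s * W₁ s - V₀ s * W₂ s :=
      funext fun s => mul_sub _ _ _
    rw [he]; exact h
  have hfeq : ∀ x ∈ Set.Icc a b, f x = ∫ s in a..x, V₀ s * f s := by
    intro x hx
    have e1 : (∫ s in a..x, V₀ s * f s)
        = (∫ s in a..x, V₀ s * W₁ s) - (∫ s in a..x, V₀ s * W₂ s) := by
      rw [← intervalIntegral.integral_sub
        (II_of_Icc hI1 ⟨le_rfl, hab⟩ hx) (II_of_Icc hI2 ⟨le_rfl, hab⟩ hx)]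
      exact intervalIntegral.integral_congr fun s _ => mul_sub _ _ _
    rw [e1, hfdef]
    simp only [h1 x hx, h2 x hx]
    abel
  -- the set where f vanishes
  set S := {x | x ∈ Set.Icc a b ∧ ∀ s ∈ Set.Icc a x, f s = 0} with hSdef
  have hfa : f a = 0 := by
    have := hfeq a ⟨le_rfl, hab⟩
    rwa [intervalIntegral.integral_same] at this
  have haS : a ∈ S := ⟨⟨le_rfl, hab⟩, fun s hs => by
    have : s = a := le_antisymm hs.2 hs.1
    rwa [this]⟩
  have hbdd : BddAbove S := ⟨b, fun x hx => hx.1.2⟩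
  set T := sSup S with hTdef
  have haT : a ≤ T := le_csSup hbdd haS
  have hTb : T ≤ b := csSup_le ⟨a, haS⟩ (fun x hx => hx.1.2)
  have hT0 : ∀ s ∈ Set.Ico a T, f s = 0 := by
    intro s hs
    obtain ⟨x', hx'S, hxx'⟩ := exists_lt_of_lt_csSup ⟨a, haS⟩ hs.2
    exact hx'S.2 s ⟨hs.1, hxx'.le⟩
  have hfT : f T = 0 := by
    rcases eq_or_lt_of_le haT with h | h
    · rw [← h]; exact hfa
    · have hsub : Set.Ico a T ⊆ Set.Icc a b := fun u hu => ⟨hu.1, hu.2.le.trans hTb⟩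
      have hne : (𝓝[Set.Ico a T] T).NeBot :=
        mem_closure_iff_nhdsWithin_neBot.mp (by rw [closure_Ico h.ne]; exact ⟨haT, le_rfl⟩)
      have ht : Filter.Tendsto f (𝓝[Set.Ico a T] T) (𝓝 (f T)) :=
        (hfc T ⟨haT, hTb⟩).mono_left (nhdsWithin_mono T hsub)
      have hev : ∀ᶠ u in 𝓝[Set.Ico a T] T, f u = 0 :=
        eventually_mem_nhdsWithin.mono fun u hu => hT0 u hu
      exact tendsto_nhds_unique (Filter.Tendsto.congr' hev ht) tendsto_const_nhds
  have hTS : ∀ s ∈ Set.Icc a T, f s = 0 := by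
    intro s hs
    rcases lt_or_eq_of_le hs.2 with h | h
    · exact hT0 s ⟨hs.1, h⟩
    · rw [h]; exact hfT
  have hTeqb : T = b := by
    by_contra hne'
    have hTlt : T < b := lt_of_le_of_ne hTb hne'
    -- pick t₁ > T with small mass
    set G := fun u => ∫ t in Set.Ioc a u, ‖V₀ t‖ with hGdef
    have hGcont : ContinuousOn G (Set.Icc a b) := continuousOn_primitive hVn
    have hsub2 : Set.Ioc T b ⊆ Set.Icc a b := fun u hu => ⟨haT.trans hu.1.le, hu.2⟩
    have hne2 : (𝓝[Set.Ioc T b] T).NeBot :=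
      mem_closure_iff_nhdsWithin_neBot.mp (by rw [closure_Ioc hTlt.ne]; exact ⟨le_rfl, hTb⟩)
    have hev : ∀ᶠ u in 𝓝[Set.Icc a b] T, G u < G T + 1/4 :=
      (hGcont T ⟨haT, hTb⟩).eventually (gt_mem_nhds (by linarith))
    have hev2 : ∀ᶠ u in 𝓝[Set.Ioc T b] T, G u < G T + 1/4 :=
      hev.filter_mono (nhdsWithin_mono T hsub2)
    obtain ⟨t₁, ht₁, ht₁mem⟩ := (hev2.and (eventually_mem_nhdsWithin)).exists
    have ht₁Icc : t₁ ∈ Set.Icc a b := hsub2 ht₁mem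
    have hTIcc : T ∈ Set.Icc a b := ⟨haT, hTb⟩
    -- max of ‖f‖ on Icc T t₁
    obtain ⟨ξ, hξK, hξmax⟩ := isCompact_Icc.exists_isMaxOn
      (Set.nonempty_Icc.mpr ht₁mem.1.le)
      ((hfc.mono (Set.Icc_subset_Icc haT ht₁mem.2)).norm)
    have hξIcc : ξ ∈ Set.Icc a b := ⟨haT.trans hξK.1, hξK.2.trans ht₁mem.2⟩
    have hfp : ∀ p ∈ Set.Icc T t₁, f p = ∫ s in T..p, V₀ s * f s := by
      intro p hp
      have hpIcc : p ∈ Set.Icc a b := ⟨haT.trans hp.1, hp.2.trans ht₁mem.2⟩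
      have i1 : IntervalIntegrable (fun s => V₀ s * f s) volume a T :=
        II_of_Icc hfint ⟨le_rfl, hab⟩ hTIcc
      have i2 : IntervalIntegrable (fun s => V₀ s * f s) volume T p :=
        II_of_Icc hfint hTIcc hpIcc
      have e0 : (∫ s in a..T, V₀ s * f s) = 0 := by
        have : Set.EqOn (fun s => V₀ s * f s) (fun _ => (0:Mat)) (Set.uIcc a T) := by
          intro s hs
          rw [Set.uIcc_of_le haT] at hs
          simp [hTS s hs]
        rw [intervalIntegral.integral_congr this, intervalIntegral.integral_const]
        simp
      rw [hfeq p hpIcc, ← intervalIntegral.integral_add_adjacent_intervals i1 i2, e0, zero_add]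
    have hm : ‖f ξ‖ ≤ 0 := by
      have h1 : ‖f ξ‖ ≤ ∫ s in T..ξ, 2 * ‖f ξ‖ * ‖V₀ s‖ := by
        calc ‖f ξ‖ = ‖∫ s in T..ξ, V₀ s * f s‖ := by rw [← hfp ξ hξK]
          _ ≤ ∫ s in T..ξ, ‖V₀ s * f s‖ :=
              intervalIntegral.norm_integral_le_integral_norm hξK.1
          _ ≤ ∫ s in T..ξ, 2 * ‖f ξ‖ * ‖V₀ s‖ := ?_
        refine intervalIntegral.integral_mono_on hξK.1
          ((II_of_Icc hfint hTIcc hξIcc).norm)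
          (((show IntegrableOn (fun s => 2 * ‖f ξ‖ * ‖V₀ s‖) (Set.Icc a b) volume
              from hVn.const_mul _).mono_set
            (Set.uIcc_subset_Icc hTIcc hξIcc)).intervalIntegrable) ?_
        intro s hs
        have hws : ‖f s‖ ≤ ‖f ξ‖ := hξmax ⟨hs.1, hs.2.trans hξK.2⟩
        calc ‖V₀ s * f s‖ ≤ 2 * (‖V₀ s‖ * ‖f s‖) := norm_mul_le2 _ _
          _ ≤ 2 * ‖f ξ‖ * ‖V₀ s‖ := by nlinarith [norm_nonneg (V₀ s), norm_nonneg (f s)]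
      have h2 : (∫ s in T..ξ, 2 * ‖f ξ‖ * ‖V₀ s‖) = 2 * ‖f ξ‖ * (G ξ - G T) := by
        rw [intervalIntegral.integral_const_mul, prim_sub hab hVn hTIcc hξIcc]
      have h3 : G ξ - G T ≤ 1/4 := by
        have hmono : G ξ ≤ G t₁ := by
          have h0 : (0:ℝ) ≤ ∫ s in ξ..t₁, ‖V₀ s‖ :=
            intervalIntegral.integral_nonneg hξK.2 fun u _ => norm_nonneg _
          rw [prim_sub hab hVn hξIcc ht₁Icc] at h0; linarith
        linarith [ht₁]
      nlinarith [norm_nonneg (f ξ), h1, h2, h3]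
    have hfzero : ∀ p ∈ Set.Icc T t₁, f p = 0 := by
      intro p hp
      have := hξmax hp
      have : ‖f p‖ ≤ 0 := le_trans (show ‖f p‖ ≤ ‖f ξ‖ from hξmax hp) hm
      simpa [norm_le_zero_iff] using this
    have ht₁S : t₁ ∈ S := ⟨ht₁Icc, fun s hs => by
      rcases le_or_gt s T with h' | h'
      · exact hTS s ⟨hs.1, h'⟩
      · exact hfzero s ⟨h'.le, hs.2⟩⟩
    exact absurd (le_csSup hbdd ht₁S) (not_le.mpr ht₁mem.1)
  intro x hx
  have := hTS x ⟨hx.1, by rw [hTeqb]; exact hx.2⟩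
  rwa [hfdef, sub_eq_zero] at this

lemma prim_mul {f g : ℝ → ℝ} {x : ℝ}
    (hf : IntegrableOn f (Set.Ioc 0 x) volume) (hg : IntegrableOn g (Set.Ioc 0 x) volume) :
    (∫ s in Set.Ioc (0:ℝ) x, f s) * (∫ s in Set.Ioc (0:ℝ) x, g s)
      = (∫ s in Set.Ioc (0:ℝ) x, f s * (∫ t in Set.Ioc (0:ℝ) s, g t))
        + (∫ s in Set.Ioc (0:ℝ) x, (∫ t in Set.Ioo (0:ℝ) s, f t) * g s) := by
  set μ := volume.restrict (Set.Ioc (0:ℝ) x) with hμ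
  set Φ := fun z : ℝ × ℝ => f z.1 * g z.2 with hΦ
  have hΦint : Integrable Φ (μ.prod μ) := hf.mul_prod hg
  set E : Set (ℝ × ℝ) := {p : ℝ × ℝ | p.2 ≤ p.1} with hE
  have hEm : MeasurableSet E := measurableSet_le measurable_snd measurable_fst
  have ht1 : (∫ s in Set.Ioc (0:ℝ) x, f s * (∫ t in Set.Ioc (0:ℝ) s, g t))
      = ∫ z, E.indicator Φ z ∂(μ.prod μ) := by
    rw [MeasureTheory.integral_prod _ (hΦint.indicator hEm)]
    refine setIntegral_congr_fun measurableSet_Ioc fun s hs => ?_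
    have hins : (fun t => E.indicator Φ (s, t)) = fun t =>
        (Set.Iic s).indicator (fun t => f s * g t) t := by
      funext t
      simp only [Set.indicator_apply, hE, hΦ, Set.mem_setOf_eq, Set.mem_Iic]
    calc f s * (∫ t in Set.Ioc (0:ℝ) s, g t)
        = ∫ t in Set.Ioc (0:ℝ) s, f s * g t := (MeasureTheory.integral_const_mul _ _).symm
      _ = ∫ t in Set.Iic s, f s * g t ∂μ := by
          have hset : Set.Iic s ∩ Set.Ioc 0 x = Set.Ioc 0 s := by
            ext u
            simp only [Set.mem_Ioc, Set.mem_inter_iff, Set.mem_Iic]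
            constructor
            · rintro ⟨h1, h2, h3⟩; exact ⟨h2, h1⟩
            · rintro ⟨h1, h2⟩; exact ⟨h2, h1, h2.trans hs.2⟩
          rw [hμ, Measure.restrict_restrict measurableSet_Iic, hset]
      _ = ∫ t, (Set.Iic s).indicator (fun t => f s * g t) t ∂μ :=
          (MeasureTheory.integral_indicator measurableSet_Iic).symm
      _ = ∫ t, E.indicator Φ (s, t) ∂μ := by rw [hins]
  have ht2 : (∫ s in Set.Ioc (0:ℝ) x, (∫ t in Set.Ioo (0:ℝ) s, f t) * g s)
      = ∫ z, Eᶜ.indicator Φ z ∂(μ.prod μ) := by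
    rw [MeasureTheory.integral_prod_symm _ (hΦint.indicator hEm.compl)]
    refine setIntegral_congr_fun measurableSet_Ioc fun v hv => ?_
    have hins : (fun u => Eᶜ.indicator Φ (u, v)) = fun u =>
        (Set.Iio v).indicator (fun u => f u * g v) u := by
      funext u
      simp only [Set.indicator_apply, hE, hΦ, Set.mem_compl_iff, Set.mem_setOf_eq, not_le,
        Set.mem_Iio]
    calc (∫ t in Set.Ioo (0:ℝ) v, f t) * g v
        = ∫ u in Set.Ioo (0:ℝ) v, f u * g v := (MeasureTheory.integral_mul_const _ _).symm
      _ = ∫ u in Set.Iio v, f u * g v ∂μ := by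
          have hset : Set.Iio v ∩ Set.Ioc 0 x = Set.Ioo 0 v := by
            ext u
            simp only [Set.mem_Ioo, Set.mem_inter_iff, Set.mem_Iio, Set.mem_Ioc]
            constructor
            · rintro ⟨h1, h2, h3⟩; exact ⟨h2, h1⟩
            · rintro ⟨h1, h2⟩; exact ⟨h2, h1, h2.le.trans hv.2⟩
          rw [hμ, Measure.restrict_restrict measurableSet_Iio, hset]
      _ = ∫ u, (Set.Iio v).indicator (fun u => f u * g v) u ∂μ :=
          (MeasureTheory.integral_indicator measurableSet_Iio).symm
      _ = ∫ u, Eᶜ.indicator Φ (u, v) ∂μ := by rw [hins]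
  rw [ht1, ht2, ← MeasureTheory.integral_add (hΦint.indicator hEm) (hΦint.indicator hEm.compl)]
  have hsum : (fun z => E.indicator Φ z + Eᶜ.indicator Φ z) = Φ := by
    funext z; by_cases h : z ∈ E <;> simp [Set.indicator_apply, h]
  rw [hsum, hΦ, MeasureTheory.integral_prod_mul]

noncomputable def entryCLM (i j : Fin 2) : Mat →L[ℝ] ℝ :=
  LinearMap.toContinuousLinearMap
    { toFun := fun M => M i j, map_add' := fun _ _ => rfl, map_smul' := fun _ _ => rfl }

@[simp] lemma entryCLM_apply (i j : Fin 2) (M : Mat) : entryCLM i j M = M i j := rfl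

noncomputable def adjCLM : Mat →L[ℝ] Mat :=
  LinearMap.toContinuousLinearMap
    { toFun := adj2,
      map_add' := fun A B => by
        simp only [adj2, Matrix.trace_add, add_smul]; abel
      map_smul' := fun c A => by
        simp only [adj2, Matrix.trace_smul, smul_eq_mul, RingHom.id_apply, smul_sub, smul_smul] }

@[simp] lemma adjCLM_apply (M : Mat) : adjCLM M = adj2 M := rfl

noncomputable def trCLM : Mat →L[ℝ] ℝ :=
  LinearMap.toContinuousLinearMap (Matrix.traceLinearMap (Fin 2) ℝ ℝ)

@[simp] lemma trCLM_apply (M : Mat) : trCLM M = M.trace := rfl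

lemma iProdC {f h : ℝ → ℝ} {x : ℝ} (hx : x ∈ Set.Icc (0:ℝ) 1)
    (hf : IntegrableOn f (Set.Ioc 0 x) volume) (hh : ContinuousOn h (Set.Icc 0 1)) :
    IntegrableOn (fun s => f s * h s) (Set.Ioc 0 x) volume := by
  obtain ⟨Cb, hCb⟩ := isCompact_Icc.exists_bound_of_continuousOn hh
  have hsub : Set.Ioc (0:ℝ) x ⊆ Set.Icc 0 1 := fun s hs => ⟨hs.1.le, hs.2.trans hx.2⟩
  have hmeas : AEStronglyMeasurable (fun s => f s * h s) (volume.restrict (Set.Ioc 0 x)) :=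
    hf.aestronglyMeasurable.mul
      ((hh.aestronglyMeasurable measurableSet_Icc).mono_measure
        (Measure.restrict_mono hsub le_rfl))
  refine Integrable.mono' (hf.norm.const_mul Cb) hmeas ?_
  refine (ae_restrict_iff' measurableSet_Ioc).mpr (Filter.Eventually.of_forall fun s hs => ?_)
  have h1 : ‖h s‖ ≤ Cb := hCb s (hsub hs)
  have h2 : ‖f s * h s‖ = ‖f s‖ * ‖h s‖ := norm_mul _ _
  nlinarith [norm_nonneg (f s), norm_nonneg (h s)]

lemma iProdC' {f h : ℝ → ℝ} {x : ℝ} (hx : x ∈ Set.Icc (0:ℝ) 1)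
    (hf : IntegrableOn f (Set.Ioc 0 x) volume) (hh : ContinuousOn h (Set.Icc 0 1)) :
    IntegrableOn (fun s => h s * f s) (Set.Ioc 0 x) volume :=
  (iProdC hx hf hh).congr_fun (fun s _ => mul_comm _ _) measurableSet_Ioc

lemma key_alg (V M : Mat) (h : V.trace = 0) :
    (V * M) 0 0 * M 1 1 + M 0 0 * ((V * M) 1 1)
      - ((V * M) 0 1 * M 1 0 + M 0 1 * ((V * M) 1 0)) = 0 := by
  have h' : V 0 0 + V 1 1 = 0 := by simpa [Matrix.trace_fin_two] using h
  simp only [Matrix.mul_apply, Fin.sum_univ_two]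
  linear_combination (M 0 0 * M 1 1 - M 0 1 * M 1 0) * h'

lemma det_one {V N : ℝ → Mat} (hV : IntegrableOn V (Set.Icc 0 1) volume)
    (hVtr : ∀ x ∈ Set.Icc (0:ℝ) 1, (V x).trace = 0)
    (hN : ∀ x ∈ Set.Icc (0:ℝ) 1, N x = 1 + ∫ s in (0:ℝ)..x, V s * N s) :
    ∀ x ∈ Set.Icc (0:ℝ) 1, (N x).det = 1 := by
  have hNint := bootstrap zero_le_one hV hN
  have hNcont := contOn_of_eq hNint hN
  have hent : ∀ p ∈ Set.Icc (0:ℝ) 1, ∀ i j, N p i j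
      = (1:Mat) i j + ∫ s in Set.Ioc 0 p, (V s * N s) i j := by
    intro p hp i j
    have h2 : (∫ s in (0:ℝ)..p, (V s * N s) i j) = (∫ s in (0:ℝ)..p, V s * N s) i j :=
      (entryCLM i j).intervalIntegral_comp_comm (II_of_Icc hNint ⟨le_rfl, zero_le_one⟩ hp)
    rw [← intervalIntegral.integral_of_le hp.1, h2, ← Matrix.add_apply, ← hN p hp]
  intro x hx
  have hsub : Set.Ioc (0:ℝ) x ⊆ Set.Icc 0 1 := fun s hs => ⟨hs.1.le, hs.2.trans hx.2⟩
  have fI : ∀ i j : Fin 2, IntegrableOn (fun s => (V s * N s) i j) (Set.Ioc 0 x) volume :=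
    fun i j => (entryCLM i j).integrable_comp (hNint.mono_set hsub)
  have hNe : ∀ i j : Fin 2, ContinuousOn (fun s => N s i j) (Set.Icc 0 1) :=
    fun i j => (entryCLM i j).continuous.comp_continuousOn hNcont
  -- inner primitive identities
  have hinner : ∀ i j : Fin 2, ∀ s ∈ Set.Ioc (0:ℝ) x,
      (∫ t in Set.Ioc (0:ℝ) s, (V t * N t) i j) = N s i j - (1:Mat) i j := by
    intro i j s hs
    rw [hent s (hsub hs) i j]; ring
  have hinner' : ∀ i j : Fin 2, ∀ s ∈ Set.Ioc (0:ℝ) x,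
      (∫ t in Set.Ioo (0:ℝ) s, (V t * N t) i j) = N s i j - (1:Mat) i j := by
    intro i j s hs
    rw [← MeasureTheory.integral_Ioc_eq_integral_Ioo]; exact hinner i j s hs
  -- products via prim_mul
  have hPP : ∀ i j k l : Fin 2,
      (∫ s in Set.Ioc (0:ℝ) x, (V s * N s) i j) * (∫ s in Set.Ioc (0:ℝ) x, (V s * N s) k l)
      = ∫ s in Set.Ioc (0:ℝ) x,
          ((V s * N s) i j * (N s k l - (1:Mat) k l)
            + (N s i j - (1:Mat) i j) * (V s * N s) k l) := by
    intro i j k l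
    rw [prim_mul (fI i j) (fI k l)]
    have c1 : (∫ s in Set.Ioc (0:ℝ) x, (V s * N s) i j * ∫ t in Set.Ioc (0:ℝ) s, (V t * N t) k l)
        = ∫ s in Set.Ioc (0:ℝ) x, (V s * N s) i j * (N s k l - (1:Mat) k l) :=
      setIntegral_congr_fun measurableSet_Ioc fun s hs => by rw [hinner k l s hs]
    have c2 : (∫ s in Set.Ioc (0:ℝ) x, (∫ t in Set.Ioo (0:ℝ) s, (V t * N t) i j) * (V s * N s) k l)
        = ∫ s in Set.Ioc (0:ℝ) x, (N s i j - (1:Mat) i j) * (V s * N s) k l :=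
      setIntegral_congr_fun measurableSet_Ioc fun s hs => by rw [hinner' i j s hs]
    rw [c1, c2]
    exact (MeasureTheory.integral_add
      (iProdC hx (fI i j) (show ContinuousOn (fun s => N s k l - (1:Mat) k l) (Set.Icc 0 1)
        from (hNe k l).sub continuousOn_const))
      (iProdC' hx (fI k l) (show ContinuousOn (fun s => N s i j - (1:Mat) i j) (Set.Icc 0 1)
        from (hNe i j).sub continuousOn_const))).symm
  -- assemble determinant
  have h00 := hent x hx 0 0
  have h01 := hent x hx 0 1
  have h10 := hent x hx 1 0
  have h11 := hent x hx 1 1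
  have hIa : IntegrableOn (fun s => (V s * N s) 0 0 * (N s 1 1 - (1:Mat) 1 1)
      + (N s 0 0 - (1:Mat) 0 0) * (V s * N s) 1 1) (Set.Ioc (0:ℝ) x) volume :=
    (iProdC hx (fI 0 0) ((hNe 1 1).sub continuousOn_const)).add
      (iProdC' hx (fI 1 1) ((hNe 0 0).sub continuousOn_const))
  have hIb : IntegrableOn (fun s => (V s * N s) 0 1 * (N s 1 0 - (1:Mat) 1 0)
      + (N s 0 1 - (1:Mat) 0 1) * (V s * N s) 1 0) (Set.Ioc (0:ℝ) x) volume :=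
    (iProdC hx (fI 0 1) ((hNe 1 0).sub continuousOn_const)).add
      (iProdC' hx (fI 1 0) ((hNe 0 1).sub continuousOn_const))
  have hIc : IntegrableOn (fun s => (V s * N s) 0 0 + (V s * N s) 1 1)
      (Set.Ioc (0:ℝ) x) volume := (fI 0 0).add (fI 1 1)
  have eA : (∫ s in Set.Ioc (0:ℝ) x, ((V s * N s) 0 0 + (V s * N s) 1 1))
      = (∫ s in Set.Ioc (0:ℝ) x, (V s * N s) 0 0) + (∫ s in Set.Ioc (0:ℝ) x, (V s * N s) 1 1) :=
    MeasureTheory.integral_add (fI 0 0) (fI 1 1)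
  have eB : (∫ s in Set.Ioc (0:ℝ) x,
        (((V s * N s) 0 0 * (N s 1 1 - (1:Mat) 1 1) + (N s 0 0 - (1:Mat) 0 0) * (V s * N s) 1 1)
        - ((V s * N s) 0 1 * (N s 1 0 - (1:Mat) 1 0) + (N s 0 1 - (1:Mat) 0 1) * (V s * N s) 1 0)))
      = (∫ s in Set.Ioc (0:ℝ) x,
          ((V s * N s) 0 0 * (N s 1 1 - (1:Mat) 1 1) + (N s 0 0 - (1:Mat) 0 0) * (V s * N s) 1 1))
        - (∫ s in Set.Ioc (0:ℝ) x,
          ((V s * N s) 0 1 * (N s 1 0 - (1:Mat) 1 0) + (N s 0 1 - (1:Mat) 0 1) * (V s * N s) 1 0)) :=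
    MeasureTheory.integral_sub hIa hIb
  have eC : (∫ s in Set.Ioc (0:ℝ) x,
        (((V s * N s) 0 0 + (V s * N s) 1 1)
        + (((V s * N s) 0 0 * (N s 1 1 - (1:Mat) 1 1) + (N s 0 0 - (1:Mat) 0 0) * (V s * N s) 1 1)
          - ((V s * N s) 0 1 * (N s 1 0 - (1:Mat) 1 0) + (N s 0 1 - (1:Mat) 0 1) * (V s * N s) 1 0))))
      = (∫ s in Set.Ioc (0:ℝ) x, ((V s * N s) 0 0 + (V s * N s) 1 1))
        + (∫ s in Set.Ioc (0:ℝ) x,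
          (((V s * N s) 0 0 * (N s 1 1 - (1:Mat) 1 1) + (N s 0 0 - (1:Mat) 0 0) * (V s * N s) 1 1)
          - ((V s * N s) 0 1 * (N s 1 0 - (1:Mat) 1 0) + (N s 0 1 - (1:Mat) 0 1) * (V s * N s) 1 0))) :=
    MeasureTheory.integral_add hIc (hIa.sub hIb)
  have eZ : (∫ s in Set.Ioc (0:ℝ) x,
        (((V s * N s) 0 0 + (V s * N s) 1 1)
        + (((V s * N s) 0 0 * (N s 1 1 - (1:Mat) 1 1) + (N s 0 0 - (1:Mat) 0 0) * (V s * N s) 1 1)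
          - ((V s * N s) 0 1 * (N s 1 0 - (1:Mat) 1 0) + (N s 0 1 - (1:Mat) 0 1) * (V s * N s) 1 0))))
      = 0 := by
    have hz : (∫ s in Set.Ioc (0:ℝ) x,
        (((V s * N s) 0 0 + (V s * N s) 1 1)
        + (((V s * N s) 0 0 * (N s 1 1 - (1:Mat) 1 1) + (N s 0 0 - (1:Mat) 0 0) * (V s * N s) 1 1)
          - ((V s * N s) 0 1 * (N s 1 0 - (1:Mat) 1 0) + (N s 0 1 - (1:Mat) 0 1) * (V s * N s) 1 0))))
        = ∫ s in Set.Ioc (0:ℝ) x, (0:ℝ) := by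
      refine setIntegral_congr_fun measurableSet_Ioc fun s hs => ?_
      have hk := key_alg (V s) (N s) (hVtr s (hsub hs))
      have o00 : (1:Mat) 0 0 = 1 := by simp
      have o11 : (1:Mat) 1 1 = 1 := by simp
      have o01 : (1:Mat) 0 1 = 0 := by simp
      have o10 : (1:Mat) 1 0 = 0 := by simp
      rw [o00, o11, o01, o10]
      linear_combination hk
    rw [hz]; simp
  have hPPa := hPP 0 0 1 1
  have hPPb := hPP 0 1 1 0
  have hcomb : (∫ s in Set.Ioc (0:ℝ) x, (V s * N s) 0 0)
      + (∫ s in Set.Ioc (0:ℝ) x, (V s * N s) 1 1)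
      + ((∫ s in Set.Ioc (0:ℝ) x, (V s * N s) 0 0) * (∫ s in Set.Ioc (0:ℝ) x, (V s * N s) 1 1)
        - (∫ s in Set.Ioc (0:ℝ) x, (V s * N s) 0 1) * (∫ s in Set.Ioc (0:ℝ) x, (V s * N s) 1 0))
      = 0 := by linear_combination eZ - eC - eA - eB + hPPa - hPPb
  rw [Matrix.det_fin_two, h00, h01, h10, h11]
  have o00 : (1:Mat) 0 0 = 1 := by simp
  have o11 : (1:Mat) 1 1 = 1 := by simp
  have o01 : (1:Mat) 0 1 = 0 := by simp
  have o10 : (1:Mat) 1 0 = 0 := by simp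
  rw [o00, o11, o01, o10]
  linear_combination hcomb

lemma II_to_Icc {f : ℝ → Mat} {a b : ℝ} (hab : a ≤ b)
    (h : IntervalIntegrable f volume a b) : IntegrableOn f (Set.Icc a b) volume := by
  have h1 := (intervalIntegrable_iff_integrableOn_Ioc_of_le hab).mp h
  have h2 := h1.union (iOn_null (f := f) (s := {a}) (by simp))
  rwa [Set.union_comm, ← Set.insert_eq, Set.Ioc_insert_left hab] at h2

@[simp] lemma mulRightCLM_apply (C M : Mat) : mulRightCLM C M = M * C := rfl
@[simp] lemma mulLeftCLM_apply (C M : Mat) : mulLeftCLM C M = C * M := rfl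

lemma II_clm {E F : Type*} [NormedAddCommGroup E] [NormedSpace ℝ E]
    [NormedAddCommGroup F] [NormedSpace ℝ F] (L : E →L[ℝ] F) {f : ℝ → E} {a b : ℝ}
    (h : IntervalIntegrable f volume a b) :
    IntervalIntegrable (fun x => L (f x)) volume a b :=
  ⟨L.integrable_comp h.1, L.integrable_comp h.2⟩

lemma reflect_eq {V₀ G : ℝ → Mat} {y : ℝ}
    (hG : ∀ x ∈ Set.Icc (0:ℝ) y, G x = 1 + ∫ s in y..x, V₀ s * G s) :
    ∀ t ∈ Set.Icc (0:ℝ) y, G (y - t) = 1 + ∫ s in (0:ℝ)..t, (-V₀ (y - s)) * G (y - s) := by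
  intro t ht
  have h1 := hG (y - t) ⟨by linarith [ht.2], by linarith [ht.1]⟩
  rw [h1]
  congr 1
  have h2 : (∫ s in (0:ℝ)..t, (fun u => V₀ u * G u) (y - s)) = ∫ s in y - t..y - 0, V₀ s * G s :=
    intervalIntegral.integral_comp_sub_left (fun u => V₀ u * G u) y
  rw [sub_zero] at h2
  calc ∫ s in y..y - t, V₀ s * G s = -∫ s in y - t..y, V₀ s * G s :=
        (intervalIntegral.integral_symm _ _)
    _ = -∫ s in (0:ℝ)..t, V₀ (y - s) * G (y - s) := by rw [← h2]
    _ = ∫ s in (0:ℝ)..t, -(V₀ (y - s) * G (y - s)) := intervalIntegral.integral_neg.symm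
    _ = ∫ s in (0:ℝ)..t, (-V₀ (y - s)) * G (y - s) := by
        refine intervalIntegral.integral_congr fun s _ => ?_
        rw [neg_mul]

lemma U_eq {V N : ℝ → Mat} {U : ℝ → ℝ → Mat}
    (hV : IntegrableOn V (Set.Icc 0 1) volume)
    (hVtr : ∀ x ∈ Set.Icc (0:ℝ) 1, (V x).trace = 0)
    (hN : ∀ x ∈ Set.Icc (0:ℝ) 1, N x = 1 + ∫ s in (0:ℝ)..x, V s * N s)
    (hU : ∀ y ∈ Set.Icc (0:ℝ) 1, ∀ x ∈ Set.Icc (0:ℝ) 1,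
      U x y = 1 + ∫ s in y..x, V s * U s y)
    {y : ℝ} (hy : y ∈ Set.Icc (0:ℝ) 1) :
    ∀ x ∈ Set.Icc (0:ℝ) 1, U x y = N x * adj2 (N y) := by
  have hNint := bootstrap zero_le_one hV hN
  have hdet := det_one hV hVtr hN
  have hWint : IntegrableOn (fun s => V s * (N s * adj2 (N y))) (Set.Icc (0:ℝ) 1) volume := by
    have h1 := (mulRightCLM (adj2 (N y))).integrable_comp hNint
    have h2 : (fun s => V s * (N s * adj2 (N y)))
        = fun s => mulRightCLM (adj2 (N y)) (V s * N s) := funext fun s => by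
      simp [mul_assoc]
    rw [h2]; exact h1
  have hWeq0 : ∀ x ∈ Set.Icc (0:ℝ) 1, N x * adj2 (N y)
      = adj2 (N y) + ∫ s in (0:ℝ)..x, V s * (N s * adj2 (N y)) := by
    intro x hx
    have h2 : (∫ s in (0:ℝ)..x, V s * (N s * adj2 (N y)))
        = (∫ s in (0:ℝ)..x, V s * N s) * adj2 (N y) := by
      have h4 : (fun s => V s * (N s * adj2 (N y)))
          = fun s => mulRightCLM (adj2 (N y)) (V s * N s) := funext fun s => by
        simp [mul_assoc]
      rw [h4, (mulRightCLM _).intervalIntegral_comp_comm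
        (II_of_Icc hNint ⟨le_rfl, zero_le_one⟩ hx)]
      simp
    calc N x * adj2 (N y)
        = (1 + ∫ s in (0:ℝ)..x, V s * N s) * adj2 (N y) := by rw [← hN x hx]
      _ = adj2 (N y) + (∫ s in (0:ℝ)..x, V s * N s) * adj2 (N y) := by
          rw [add_mul, one_mul]
      _ = adj2 (N y) + ∫ s in (0:ℝ)..x, V s * (N s * adj2 (N y)) := by rw [h2]
  have hWy : N y * adj2 (N y) = 1 := by rw [mul_adj2, hdet y hy, one_smul]
  have hWeq : ∀ x ∈ Set.Icc (0:ℝ) 1, N x * adj2 (N y)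
      = 1 + ∫ s in y..x, V s * (N s * adj2 (N y)) := by
    intro x hx
    have hsplit : (∫ s in (0:ℝ)..y, V s * (N s * adj2 (N y)))
        + (∫ s in y..x, V s * (N s * adj2 (N y)))
        = ∫ s in (0:ℝ)..x, V s * (N s * adj2 (N y)) :=
      intervalIntegral.integral_add_adjacent_intervals
        (II_of_Icc hWint ⟨le_rfl, zero_le_one⟩ hy) (II_of_Icc hWint hy hx)
    have h0 := hWeq0 x hx
    have h0y := hWeq0 y hy
    rw [← hsplit, ← add_assoc, ← h0y, hWy] at h0
    exact h0
  have hUy := hU y hy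
  have hright : ∀ x ∈ Set.Icc y 1, U x y = N x * adj2 (N y) := by
    have hVr : IntegrableOn V (Set.Icc y 1) volume := hV.mono_set (Set.Icc_subset_Icc_left hy.1)
    exact uniq hy.2 hVr (fun x hx => hUy x ⟨hy.1.trans hx.1, hx.2⟩)
      (fun x hx => hWeq x ⟨hy.1.trans hx.1, hx.2⟩)
  have hleft : ∀ x ∈ Set.Icc (0:ℝ) y, U x y = N x * adj2 (N y) := by
    have hVI : IntervalIntegrable V volume 0 y :=
      (hV.mono_set (Set.uIcc_subset_Icc ⟨le_rfl, zero_le_one⟩ hy)).intervalIntegrable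
    have hVref : IntervalIntegrable (fun t => V (y - t)) volume 0 y := by
      have h5 := (hVI.comp_sub_left y).symm
      simpa using h5
    have hVref2 : IntegrableOn (fun t => -V (y - t)) (Set.Icc (0:ℝ) y) volume :=
      II_to_Icc hy.1 hVref.neg
    have hUrefl := reflect_eq (G := fun x => U x y) (V₀ := V)
      (fun x hx => hUy x ⟨hx.1, hx.2.trans hy.2⟩)
    have hWrefl := reflect_eq (G := fun x => N x * adj2 (N y)) (V₀ := V)
      (fun x hx => hWeq x ⟨hx.1, hx.2.trans hy.2⟩)
    have huni := uniq hy.1 hVref2 hUrefl hWrefl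
    intro x hx
    have h6 := huni (y - x) ⟨by linarith [hx.2], by linarith [hx.1]⟩
    simpa [sub_sub_cancel] using h6
  intro x hx
  rcases le_total x y with h | h
  · exact hleft x ⟨hx.1, h⟩
  · exact hright x ⟨h, hx.2⟩

noncomputable def transCLM : Mat →L[ℝ] Mat :=
  LinearMap.toContinuousLinearMap
    { toFun := Matrix.transpose,
      map_add' := fun A B => Matrix.transpose_add A B,
      map_smul' := fun c A => Matrix.transpose_smul c A }

@[simp] lemma transCLM_apply (M : Mat) : transCLM M = Mᵀ := rfl

lemma trace_id (P Q : Mat) :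
    ((P * adj2 Q)ᵀ * (P * adj2 Q)).trace = ((Pᵀ * P) * adj2 (Qᵀ * Q)).trace := by
  simp only [adj2, Matrix.trace_fin_two, Matrix.mul_apply, Matrix.transpose_apply,
    Fin.sum_univ_two, Matrix.sub_apply, Matrix.smul_apply, Matrix.one_apply, smul_eq_mul]
  norm_num
  ring

/-- Let `V : [0,1] → M₂(ℝ)` be integrable, symmetric, trace-zero, let `N` solve
`N' = VN`, `N(0) = I` (expressed via the integral equation), and `H = NᵀN`.
With `U₊(x,y)` the solution of `∂ₓU₊ = V U₊`, `U₊(y,y) = I`, one has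
`det(∫₀¹ H) = (1/2)∫₀¹∫₀¹ ‖U₊(x,y)‖²_HS dx dy`, `‖A‖²_HS = tr(AᵀA)`. -/
theorem stmt_9 (V N : ℝ → Matrix (Fin 2) (Fin 2) ℝ)
    (U : ℝ → ℝ → Matrix (Fin 2) (Fin 2) ℝ)
    (hV : @IntegrableOn ℝ (Matrix (Fin 2) (Fin 2) ℝ) _
      Matrix.normedAddCommGroup.toUniformSpace.toTopologicalSpace _ V (Set.Icc (0 : ℝ) 1) volume)
    (hVsymm : ∀ x ∈ Set.Icc (0 : ℝ) 1, (V x)ᵀ = V x)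
    (hVtr : ∀ x ∈ Set.Icc (0 : ℝ) 1, (V x).trace = 0)
    (hN : ∀ x ∈ Set.Icc (0 : ℝ) 1, N x = 1 + ∫ s in (0 : ℝ)..x, V s * N s)
    (hU : ∀ y ∈ Set.Icc (0 : ℝ) 1, ∀ x ∈ Set.Icc (0 : ℝ) 1,
      U x y = 1 + ∫ s in y..x, V s * U s y) :
    (∫ ξ in (0 : ℝ)..1, (N ξ)ᵀ * N ξ).det =
      (1 / 2) * ∫ x in (0 : ℝ)..1, ∫ y in (0 : ℝ)..1, ((U x y)ᵀ * U x y).trace := by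
  have hNint := bootstrap zero_le_one hV hN
  have hNcont := contOn_of_eq hNint hN
  have hHcont : ContinuousOn (fun ξ => (N ξ)ᵀ * N ξ) (Set.Icc (0:ℝ) 1) := by
    have ht : ContinuousOn (fun ξ => (N ξ)ᵀ) (Set.Icc (0:ℝ) 1) := by
      have := transCLM.continuous.comp_continuousOn hNcont
      simpa [Function.comp_def] using this
    exact ht.mul hNcont
  have hHII : IntervalIntegrable (fun ξ => (N ξ)ᵀ * N ξ) volume 0 1 := by
    apply ContinuousOn.intervalIntegrable
    rwa [Set.uIcc_of_le zero_le_one]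
  set A := ∫ ξ in (0:ℝ)..1, (N ξ)ᵀ * N ξ with hA
  have hadjA : (∫ ξ in (0:ℝ)..1, adj2 ((N ξ)ᵀ * N ξ)) = adj2 A := by
    have h := adjCLM.intervalIntegral_comp_comm hHII
    rw [← hA] at h
    simpa using h
  have hdetA : A.det = (1/2) * (A * adj2 A).trace := by
    have := trace_mul_adj2 A; linarith
  have hstep1 : (A * adj2 A).trace
      = ∫ x in (0:ℝ)..1, (((N x)ᵀ * N x) * adj2 A).trace := by
    have hcomm := (trCLM.comp (mulRightCLM (adj2 A))).intervalIntegral_comp_comm hHII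
    rw [← hA] at hcomm
    simpa using hcomm.symm
  have hIIadjH : IntervalIntegrable (fun ξ => adj2 ((N ξ)ᵀ * N ξ)) volume 0 1 := by
    have := II_clm adjCLM hHII; simpa using this
  have hstep2 : ∀ x : ℝ, (((N x)ᵀ * N x) * adj2 A).trace
      = ∫ t in (0:ℝ)..1, (((N x)ᵀ * N x) * adj2 ((N t)ᵀ * N t)).trace := by
    intro x
    have hcomm := (trCLM.comp (mulLeftCLM ((N x)ᵀ * N x))).intervalIntegral_comp_comm hIIadjH
    rw [hadjA] at hcomm
    simpa using hcomm.symm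
  have h3 : (∫ x in (0:ℝ)..1, (((N x)ᵀ * N x) * adj2 A).trace)
      = ∫ x in (0:ℝ)..1, ∫ t in (0:ℝ)..1, (((N x)ᵀ * N x) * adj2 ((N t)ᵀ * N t)).trace :=
    intervalIntegral.integral_congr fun x _ => hstep2 x
  have hRHS : (∫ x in (0:ℝ)..1, ∫ t in (0:ℝ)..1, ((U x t)ᵀ * U x t).trace)
      = ∫ x in (0:ℝ)..1, ∫ t in (0:ℝ)..1, (((N x)ᵀ * N x) * adj2 ((N t)ᵀ * N t)).trace := by
    refine intervalIntegral.integral_congr fun x hx => ?_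
    rw [Set.uIcc_of_le zero_le_one] at hx
    refine intervalIntegral.integral_congr fun t ht => ?_
    rw [Set.uIcc_of_le zero_le_one] at ht
    rw [U_eq hV hVtr hN hU ht x hx]
    exact trace_id (N x) (N t)
  rw [hdetA, hstep1, h3, ← hRHS]
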